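/- If additionally λ < h, then there exists a constant C > 0 such that for every integer k ≥ 1 and every y ∈ [y_k, y_{k+1}), L(y) ≥ C·(h/λ)^k. Consequently L(y) → +∞ as y → y_∞ from the left, whereas L(y_∞) = π. -/

import Mathlib

open Real MeasureTheory Set Filter

noncomputable section

namespace StokesCounterexample

/-- `ySeq a k = Σ_{j=1}^k a^j` (so `ySeq a 0 = 0`). -/
def ySeq (a : ℝ) (k : ℕ) : ℝ := ∑ j ∈ Finset.range k, a ^ (j + 1)

/-- `yInf a = Σ_{j=1}^∞ a^j = a / (1 - a)`. -/
def yInf (a : ℝ) : ℝ := a / (1 - a)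

/-- `fSeq h l 0 = 0` and `fSeq h l k x = h^k · sin (x / l^k)` for `k ≥ 1`. -/
def fSeq (h l : ℝ) (k : ℕ) (x : ℝ) : ℝ :=
  if k = 0 then 0 else h ^ k * Real.sin (x / l ^ k)

open Classical in
/-- The interpolation `ψ(x,y) = (1 - φ_k(y))·f_k(x) + φ_k(y)·f_{k+1}(x)` for
`y ∈ [y_k, y_{k+1})`, where `φ_k(y) = φ((y - y_k)/a^(k+1))`, extended by `0`
outside of `⋃_k [y_k, y_{k+1})` (in particular `ψ(x, y_∞) = 0`). -/
def psi (a h l : ℝ) (φ : ℝ → ℝ) (x y : ℝ) : ℝ :=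
  if hk : ∃ k : ℕ, ySeq a k ≤ y ∧ y < ySeq a (k + 1) then
    (1 - φ ((y - ySeq a hk.choose) / a ^ (hk.choose + 1))) * fSeq h l hk.choose x
      + φ ((y - ySeq a hk.choose) / a ^ (hk.choose + 1)) * fSeq h l (hk.choose + 1) x
  else 0

/-- The partial derivative of `ψ` in the first variable. -/
def psi₁ (a h l : ℝ) (φ : ℝ → ℝ) (x y : ℝ) : ℝ :=
  deriv (fun t => psi a h l φ t y) x

/-- The partial derivative of `ψ` in the second variable. -/
def psi₂ (a h l : ℝ) (φ : ℝ → ℝ) (x y : ℝ) : ℝ :=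
  deriv (fun s => psi a h l φ x s) y

/-- The arc length `L(x,y) = ∫_0^x √(1 + (∂₁ψ(t,y))²) dt`. -/
def arc (a h l : ℝ) (φ : ℝ → ℝ) (x y : ℝ) : ℝ :=
  ∫ t in (0:ℝ)..x, Real.sqrt (1 + psi₁ a h l φ t y ^ 2)

/-- The length `L(y) = L(π, y)` of the section of the graph of `ψ` at height `y`. -/
def len (a h l : ℝ) (φ : ℝ → ℝ) (y : ℝ) : ℝ := arc a h l φ π y

-- auxiliary lemmas
lemma ySeq_succ (a : ℝ) (k : ℕ) : ySeq a (k + 1) = ySeq a k + a ^ (k + 1) :=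
  Finset.sum_range_succ _ _

lemma ySeq_mono {a : ℝ} (ha : 0 ≤ a) : Monotone (ySeq a) := fun m n hmn =>
  Finset.sum_le_sum_of_subset_of_nonneg (Finset.range_subset_range.2 hmn)
    (fun _ _ _ => pow_nonneg ha _)

lemma ySeq_nonneg {a : ℝ} (ha : 0 ≤ a) (k : ℕ) : 0 ≤ ySeq a k :=
  Finset.sum_nonneg fun _ _ => pow_nonneg ha _

lemma ySeq_lt_yInf {a : ℝ} (ha0 : 0 < a) (ha1 : a < 1) (k : ℕ) : ySeq a k < yInf a := by
  have hys : ySeq a k = (∑ i ∈ Finset.range k, a ^ i) * a := by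
    rw [Finset.sum_mul]; exact Finset.sum_congr rfl fun i _ => (pow_succ a i).symm
  have hgeo : (∑ i ∈ Finset.range k, a ^ i) * (a - 1) = a ^ k - 1 := geom_sum_mul a k
  have hpow : 0 < a ^ k := pow_pos ha0 k
  have h1a : 0 < 1 - a := by linarith
  rw [hys, yInf, lt_div_iff₀ h1a]
  nlinarith [hgeo]

lemma ySeq_tendsto {a : ℝ} (ha0 : 0 < a) (ha1 : a < 1) :
    Tendsto (ySeq a) atTop (nhds (yInf a)) := by
  have h := hasSum_geometric_of_lt_one ha0.le ha1
  have h2 : HasSum (fun j : ℕ => a ^ (j + 1)) (a * (1 - a)⁻¹) := by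
    simpa [pow_succ, mul_comm] using h.mul_left a
  exact (by simpa [yInf, div_eq_mul_inv] using h2.tendsto_sum_nat :
    Tendsto (fun n => ∑ j ∈ Finset.range n, a ^ (j + 1)) atTop (nhds (yInf a)))

lemma integral_cos_mul_eq_zero (c : ℝ) (hc : c ≠ 0) (hsin : Real.sin (c * π) = 0) :
    ∫ x in (0:ℝ)..π, Real.cos (c * x) = 0 := by
  rw [intervalIntegral.integral_comp_mul_left (fun x => Real.cos x) hc]
  simp [integral_cos, hsin]

lemma orth_ne {p q : ℕ} (hpq : p ≠ q) :
    ∫ x in (0:ℝ)..π, Real.cos (p * x) * Real.cos (q * x) = 0 := by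
  have h1 : ∀ x ∈ Set.uIcc (0:ℝ) π, Real.cos ((p:ℝ) * x) * Real.cos ((q:ℝ) * x)
      = (Real.cos (((p:ℝ) - q) * x) + Real.cos (((p:ℝ) + q) * x)) / 2 := by
    intro x _
    rw [sub_mul, add_mul, Real.cos_sub, Real.cos_add]
    ring
  rw [intervalIntegral.integral_congr h1]
  have hi1 : IntervalIntegrable (fun x : ℝ => Real.cos (((p:ℝ) - q) * x)) volume 0 π :=
    (Real.continuous_cos.comp (continuous_const.mul continuous_id)).intervalIntegrable _ _
  have hi2 : IntervalIntegrable (fun x : ℝ => Real.cos (((p:ℝ) + q) * x)) volume 0 π :=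
    (Real.continuous_cos.comp (continuous_const.mul continuous_id)).intervalIntegrable _ _
  have hc1 : ((p:ℝ) - q) ≠ 0 := sub_ne_zero.2 (by exact_mod_cast hpq)
  have hc2 : ((p:ℝ) + q) ≠ 0 := by
    have h : p + q ≠ 0 := by omega
    exact_mod_cast h
  have hs1 : Real.sin (((p:ℝ) - q) * π) = 0 := by
    have := Real.sin_int_mul_pi ((p:ℤ) - q)
    push_cast at this ⊢
    exact this
  have hs2 : Real.sin (((p:ℝ) + q) * π) = 0 := by
    have := Real.sin_int_mul_pi ((p:ℤ) + q)
    push_cast at this ⊢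
    exact this
  rw [intervalIntegral.integral_div, intervalIntegral.integral_add hi1 hi2,
    integral_cos_mul_eq_zero _ hc1 hs1, integral_cos_mul_eq_zero _ hc2 hs2]
  norm_num

lemma orth_eq {p : ℕ} (hp : p ≠ 0) :
    ∫ x in (0:ℝ)..π, Real.cos (p * x) ^ 2 = π / 2 := by
  have h1 : ∀ x ∈ Set.uIcc (0:ℝ) π, Real.cos ((p:ℝ) * x) ^ 2
      = 1 / 2 + Real.cos (((2 * p : ℕ) : ℝ) * x) / 2 := by
    intro x _
    rw [Real.cos_sq]
    push_cast
    ring_nf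
  rw [intervalIntegral.integral_congr h1]
  have hi2 : IntervalIntegrable (fun x : ℝ => Real.cos (((2 * p : ℕ) : ℝ) * x) / 2) volume 0 π :=
    ((Real.continuous_cos.comp (continuous_const.mul continuous_id)).div_const 2).intervalIntegrable _ _
  have hc : ((2 * p : ℕ) : ℝ) ≠ 0 := by
    have : 2 * p ≠ 0 := by omega
    exact_mod_cast this
  have hs : Real.sin (((2 * p : ℕ) : ℝ) * π) = 0 := by
    have := Real.sin_int_mul_pi ((2 * p : ℕ) : ℤ)
    push_cast at this ⊢
    exact this
  have h2 : ∫ x in (0:ℝ)..π, Real.cos (((2 * p : ℕ) : ℝ) * x) / 2 = 0 := by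
    rw [intervalIntegral.integral_div, integral_cos_mul_eq_zero _ hc hs]
    norm_num
  rw [intervalIntegral.integral_add (intervalIntegrable_const) hi2, h2]
  simp [intervalIntegral.integral_const]
  ring

lemma psi_eq (a h l : ℝ) (ha0 : 0 < a) (φ : ℝ → ℝ) {k : ℕ} {y : ℝ}
    (h1 : ySeq a k ≤ y) (h2 : y < ySeq a (k + 1)) (x : ℝ) :
    psi a h l φ x y = (1 - φ ((y - ySeq a k) / a ^ (k + 1))) * fSeq h l k x
      + φ ((y - ySeq a k) / a ^ (k + 1)) * fSeq h l (k + 1) x := by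
  have hex : ∃ j : ℕ, ySeq a j ≤ y ∧ y < ySeq a (j + 1) := ⟨k, h1, h2⟩
  have hj1 := hex.choose_spec.1
  have hj2 := hex.choose_spec.2
  have hjk : hex.choose = k := by
    rcases lt_trichotomy hex.choose k with hc | hc | hc
    · exact absurd (hj2.trans_le (ySeq_mono ha0.le (Nat.succ_le_of_lt hc))) (not_lt.2 h1)
    · exact hc
    · exact absurd (h2.trans_le (ySeq_mono ha0.le (Nat.succ_le_of_lt hc))) (not_lt.2 hj1)
  rw [psi, dif_pos hex, hjk]

lemma fSeq_hasDerivAt (h l : ℝ) (hl : l ≠ 0) {m : ℕ} (hm : m ≠ 0) (x : ℝ) :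
    HasDerivAt (fun t => fSeq h l m t)
      (h ^ m * (Real.cos (x / l ^ m) * (1 / l ^ m))) x := by
  simp only [fSeq, if_neg hm]
  exact (((hasDerivAt_id x).div_const (l ^ m)).sin).const_mul (h ^ m)

lemma psi₁_eq (a h l : ℝ) (ha0 : 0 < a) (hl : l ≠ 0) (φ : ℝ → ℝ) {k : ℕ} (hk : k ≠ 0)
    {y : ℝ} (h1 : ySeq a k ≤ y) (h2 : y < ySeq a (k + 1)) (x : ℝ) :
    psi₁ a h l φ x y =
      (1 - φ ((y - ySeq a k) / a ^ (k + 1))) * (h ^ k * (Real.cos (x / l ^ k) * (1 / l ^ k)))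
      + φ ((y - ySeq a k) / a ^ (k + 1))
        * (h ^ (k + 1) * (Real.cos (x / l ^ (k + 1)) * (1 / l ^ (k + 1)))) := by
  have heq : (fun t => psi a h l φ t y)
      = fun t => (1 - φ ((y - ySeq a k) / a ^ (k + 1))) * fSeq h l k t
        + φ ((y - ySeq a k) / a ^ (k + 1)) * fSeq h l (k + 1) t :=
    funext (psi_eq a h l ha0 φ h1 h2)
  rw [psi₁, heq]
  exact (((fSeq_hasDerivAt h l hl hk x).const_mul _).add
    ((fSeq_hasDerivAt h l hl (Nat.succ_ne_zero k) x).const_mul _)).deriv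

lemma len_ge (a h l : ℝ) (ha0 : 0 < a) (hh0 : 0 < h)
    (N : ℕ) (hN : 1 < N) (hlN : l = 1 / N) (hlh : l < h)
    (φ : ℝ → ℝ) (hφ01 : ∀ t, φ t ∈ Set.Icc (0:ℝ) 1)
    {k : ℕ} (hk : 1 ≤ k) {y : ℝ} (h1 : ySeq a k ≤ y) (h2 : y < ySeq a (k + 1)) :
    π / 4 * (h / l) ^ k ≤ len a h l φ y := by
  set b : ℝ := (N : ℝ) with hbdef
  have hb1 : (1:ℝ) < b := by rw [hbdef]; exact_mod_cast hN
  have hb0 : (0:ℝ) < b := by linarith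
  have hl0 : 0 < l := by rw [hlN]; positivity
  have hlb : l = b⁻¹ := by rw [hlN, one_div]
  set c : ℝ := φ ((y - ySeq a k) / a ^ (k + 1)) with hcdef
  have hc0 : 0 ≤ c := (hφ01 _).1
  have hc1 : c ≤ 1 := (hφ01 _).2
  have hhb : 1 < h * b := by
    have hbh : b⁻¹ < h := hlb ▸ hlh
    calc (1:ℝ) = b⁻¹ * b := by field_simp
    _ < h * b := mul_lt_mul_of_pos_right hbh hb0
  set A : ℝ := (1 - c) * (h ^ k * b ^ k) with hAdef
  set B : ℝ := c * (h ^ (k + 1) * b ^ (k + 1)) with hBdef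
  have hA0 : 0 ≤ A := mul_nonneg (by linarith) (by positivity)
  have hB0 : 0 ≤ B := mul_nonneg hc0 (by positivity)
  set g : ℝ → ℝ := fun t => A * Real.cos (b ^ k * t) + B * Real.cos (b ^ (k + 1) * t)
    with hgdef
  have hpsi : ∀ t, psi₁ a h l φ t y = g t := by
    intro t
    rw [psi₁_eq a h l ha0 (ne_of_gt hl0) φ (by omega) h1 h2 t]
    have e1 : ∀ m : ℕ, t / l ^ m = b ^ m * t := by
      intro m; rw [hlb, inv_pow, div_eq_mul_inv, inv_inv, mul_comm]
    have e2 : ∀ m : ℕ, (1:ℝ) / l ^ m = b ^ m := by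
      intro m; rw [hlb, inv_pow, one_div, inv_inv]
    rw [e1 k, e1 (k + 1), e2 k, e2 (k + 1)]
    simp only [hgdef, hAdef, hBdef, hcdef]
    ring
  have hgc : Continuous g := by fun_prop
  have hint_abs : IntervalIntegrable (fun t => |g t|) volume 0 π :=
    hgc.abs.intervalIntegrable _ _
  have hint_sqrt : IntervalIntegrable (fun t => Real.sqrt (1 + g t ^ 2)) volume 0 π :=
    (Real.continuous_sqrt.comp (by fun_prop)).intervalIntegrable _ _
  have hlen : len a h l φ y = ∫ t in (0:ℝ)..π, Real.sqrt (1 + g t ^ 2) := by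
    rw [len, arc]
    exact intervalIntegral.integral_congr fun t _ => by rw [hpsi t]
  have habs_le : (∫ t in (0:ℝ)..π, |g t|) ≤ len a h l φ y := by
    rw [hlen]
    refine intervalIntegral.integral_mono_on pi_pos.le hint_abs hint_sqrt fun t _ => ?_
    rw [← Real.sqrt_sq_eq_abs]
    exact Real.sqrt_le_sqrt (by nlinarith [sq_nonneg (g t)])
  have key : ∀ m : ℕ, (∫ t in (0:ℝ)..π, g t * Real.cos (b ^ m * t))
      ≤ ∫ t in (0:ℝ)..π, |g t| := by
    intro m
    have hi : IntervalIntegrable (fun t => |g t * Real.cos (b ^ m * t)|) volume 0 π :=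
      (hgc.mul (by fun_prop)).abs.intervalIntegrable _ _
    calc (∫ t in (0:ℝ)..π, g t * Real.cos (b ^ m * t))
        ≤ |∫ t in (0:ℝ)..π, g t * Real.cos (b ^ m * t)| := le_abs_self _
      _ ≤ ∫ t in (0:ℝ)..π, |g t * Real.cos (b ^ m * t)| :=
          intervalIntegral.abs_integral_le_integral_abs pi_pos.le
      _ ≤ ∫ t in (0:ℝ)..π, |g t| := by
          refine intervalIntegral.integral_mono_on pi_pos.le hi hint_abs fun t _ => ?_
          rw [abs_mul]
          exact mul_le_of_le_one_right (abs_nonneg _) (Real.abs_cos_le_one _)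
  have hbk : ∀ m : ℕ, b ^ m = ((N ^ m : ℕ) : ℝ) := fun m => by push_cast; rfl
  have hNne : ∀ m : ℕ, N ^ m ≠ 0 := fun m => by positivity
  have hNlt : N ^ k < N ^ (k + 1) := Nat.pow_lt_pow_right hN (Nat.lt_succ_self k)
  have split : ∀ p : ℕ, (∫ t in (0:ℝ)..π, g t * Real.cos (b ^ p * t))
      = A * (∫ t in (0:ℝ)..π, Real.cos (b ^ k * t) * Real.cos (b ^ p * t))
        + B * (∫ t in (0:ℝ)..π, Real.cos (b ^ (k + 1) * t) * Real.cos (b ^ p * t)) := by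
    intro p
    rw [← intervalIntegral.integral_const_mul, ← intervalIntegral.integral_const_mul,
      ← intervalIntegral.integral_add
        ((Continuous.intervalIntegrable (by fun_prop) _ _))
        ((Continuous.intervalIntegrable (by fun_prop) _ _))]
    exact intervalIntegral.integral_congr fun t _ => by simp only [hgdef]; ring
  have hIk : (∫ t in (0:ℝ)..π, g t * Real.cos (b ^ k * t)) = A * (π / 2) := by
    rw [split k]
    have e1 : (∫ t in (0:ℝ)..π, Real.cos (b ^ k * t) * Real.cos (b ^ k * t)) = π / 2 := by
      have := orth_eq (p := N ^ k) (hNne k)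
      rw [hbk k]
      calc (∫ t in (0:ℝ)..π, Real.cos (((N ^ k : ℕ):ℝ) * t) * Real.cos (((N ^ k : ℕ):ℝ) * t))
          = ∫ t in (0:ℝ)..π, Real.cos (((N ^ k : ℕ):ℝ) * t) ^ 2 :=
            intervalIntegral.integral_congr fun t _ => (sq _).symm
        _ = π / 2 := this
    have e2 : (∫ t in (0:ℝ)..π, Real.cos (b ^ (k + 1) * t) * Real.cos (b ^ k * t)) = 0 := by
      rw [hbk k, hbk (k + 1)]
      exact orth_ne hNlt.ne'
    rw [e1, e2]
    ring
  have hIk1 : (∫ t in (0:ℝ)..π, g t * Real.cos (b ^ (k + 1) * t)) = B * (π / 2) := by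
    rw [split (k + 1)]
    have e1 : (∫ t in (0:ℝ)..π, Real.cos (b ^ k * t) * Real.cos (b ^ (k + 1) * t)) = 0 := by
      rw [hbk k, hbk (k + 1)]
      exact orth_ne hNlt.ne
    have e2 : (∫ t in (0:ℝ)..π, Real.cos (b ^ (k + 1) * t) * Real.cos (b ^ (k + 1) * t))
        = π / 2 := by
      have := orth_eq (p := N ^ (k + 1)) (hNne (k + 1))
      rw [hbk (k + 1)]
      calc (∫ t in (0:ℝ)..π,
            Real.cos (((N ^ (k+1) : ℕ):ℝ) * t) * Real.cos (((N ^ (k+1) : ℕ):ℝ) * t))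
          = ∫ t in (0:ℝ)..π, Real.cos (((N ^ (k+1) : ℕ):ℝ) * t) ^ 2 :=
            intervalIntegral.integral_congr fun t _ => (sq _).symm
        _ = π / 2 := this
    rw [e1, e2]
    ring
  have hAle : A * (π / 2) ≤ len a h l φ y := hIk ▸ (key k).trans habs_le
  have hBle : B * (π / 2) ≤ len a h l φ y := hIk1 ▸ (key (k + 1)).trans habs_le
  have hdl : (h / l) ^ k = h ^ k * b ^ k := by rw [hlb, div_eq_mul_inv, inv_inv, mul_pow]
  rw [hdl]
  have hx0 : (0:ℝ) < h ^ k * b ^ k := by positivity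
  rcases le_or_gt c (1 / 2) with hcc | hcc
  · have hA' : 1 / 2 * (h ^ k * b ^ k) ≤ A :=
      mul_le_mul_of_nonneg_right (by linarith) hx0.le
    nlinarith [pi_pos]
  · have hpow : h ^ k * b ^ k ≤ h ^ (k + 1) * b ^ (k + 1) := by
      have : h ^ k * b ^ k * 1 ≤ (h ^ k * b ^ k) * (h * b) :=
        mul_le_mul_of_nonneg_left hhb.le hx0.le
      calc h ^ k * b ^ k = h ^ k * b ^ k * 1 := by ring
        _ ≤ (h ^ k * b ^ k) * (h * b) := this
        _ = h ^ (k + 1) * b ^ (k + 1) := by ring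
    have hB' : 1 / 2 * (h ^ k * b ^ k) ≤ B := by
      have : 1 / 2 * (h ^ (k + 1) * b ^ (k + 1)) ≤ B :=
        mul_le_mul_of_nonneg_right (by linarith) (by positivity)
      linarith
    calc π / 4 * (h ^ k * b ^ k) = 1 / 2 * (h ^ k * b ^ k) * (π / 2) := by ring
      _ ≤ B * (π / 2) := mul_le_mul_of_nonneg_right hB' (by positivity)
      _ ≤ len a h l φ y := hBle

/-- If moreover `λ < h`, the section lengths satisfy `L(y) ≥ C (h/λ)^k` on `[y_k, y_{k+1})`
for `k ≥ 1`; consequently `L(y) → ∞` as `y → y_∞⁻`, whereas `L(y_∞) = π`. -/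
theorem len_blows_up (a h l : ℝ) (ha0 : 0 < a) (ha1 : a < 1) (hh0 : 0 < h) (hh1 : h < 1)
    (hl0 : 0 < l) (hl1 : l < 1) (hlN : ∃ N : ℕ, 0 < N ∧ l = 1 / N)
    (φ : ℝ → ℝ) (hφsmooth : ContDiff ℝ (⊤ : ℕ∞) φ) (hφmono : Monotone φ)
    (hφ01 : ∀ t, φ t ∈ Set.Icc (0:ℝ) 1)
    (hφd0 : ∀ t, 0 ≤ deriv φ t) (hφd2 : ∀ t, deriv φ t ≤ 2)
    (hφ0 : ∃ ε > 0, ∀ t < ε, φ t = 0) (hφ1 : ∃ ε > 0, ∀ t > 1 - ε, φ t = 1)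
    (hlh : l < h) :
    (∃ C : ℝ, 0 < C ∧ ∀ k : ℕ, 1 ≤ k → ∀ y : ℝ, ySeq a k ≤ y → y < ySeq a (k + 1) →
      C * (h / l) ^ k ≤ len a h l φ y) ∧
    Tendsto (len a h l φ) (nhdsWithin (yInf a) (Set.Iio (yInf a))) atTop ∧
    len a h l φ (yInf a) = π := by
  obtain ⟨N, hN0, hlNeq⟩ := hlN
  have hN1 : 1 < N := by
    by_contra hcon
    have hNe : N = 1 := by omega
    subst hNe
    norm_num at hlNeq
    rw [hlNeq] at hl1
    norm_num at hl1
  refine ⟨⟨π / 4, by positivity, fun k hk y hy1 hy2 =>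
    len_ge a h l ha0 hh0 N hN1 hlNeq hlh φ hφ01 hk hy1 hy2⟩, ?_, ?_⟩
  · rw [tendsto_atTop]
    intro M
    have hdl1 : 1 < h / l := (one_lt_div hl0).2 hlh
    have htend : Tendsto (fun k : ℕ => π / 4 * (h / l) ^ k) atTop atTop :=
      (tendsto_pow_atTop_atTop_of_one_lt hdl1).const_mul_atTop (by positivity)
    obtain ⟨k, hkM, hk1⟩ := ((htend.eventually_ge_atTop M).and (eventually_ge_atTop 1)).exists
    filter_upwards [Ioo_mem_nhdsLT_of_mem ⟨ySeq_lt_yInf ha0 ha1 k, le_refl (yInf a)⟩] with y hy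
    obtain ⟨hy1, hy2⟩ := hy
    have hex : ∃ n, y < ySeq a n :=
      ((ySeq_tendsto ha0 ha1).eventually (eventually_gt_nhds hy2)).exists
    classical
    have hn1 : y < ySeq a (Nat.find hex) := Nat.find_spec hex
    have hnne : Nat.find hex ≠ 0 := by
      intro h0
      rw [h0] at hn1
      simp [ySeq] at hn1
      have h00 : 0 ≤ ySeq a k := ySeq_nonneg ha0.le k
      linarith
    obtain ⟨j, hj⟩ : ∃ j, Nat.find hex = j + 1 := ⟨Nat.find hex - 1, by omega⟩
    have hjle : ySeq a j ≤ y := not_lt.1 (Nat.find_min hex (by omega))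
    have hjlt : y < ySeq a (j + 1) := hj ▸ hn1
    have hkj : k ≤ j := by
      by_contra hcon
      have hle : ySeq a (j + 1) ≤ ySeq a k := ySeq_mono ha0.le (by omega)
      linarith
    have hj1 : 1 ≤ j := le_trans hk1 hkj
    calc M ≤ π / 4 * (h / l) ^ k := hkM
      _ ≤ π / 4 * (h / l) ^ j :=
          mul_le_mul_of_nonneg_left (pow_le_pow_right₀ (le_of_lt hdl1) hkj) (by positivity)
      _ ≤ len a h l φ y := len_ge a h l ha0 hh0 N hN1 hlNeq hlh φ hφ01 hj1 hjle hjlt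
  · have hnone : ¬ ∃ k : ℕ, ySeq a k ≤ yInf a ∧ yInf a < ySeq a (k + 1) := by
      rintro ⟨k, -, hlt⟩
      exact absurd hlt (not_lt.2 (ySeq_lt_yInf ha0 ha1 (k + 1)).le)
    have hzero : (fun x => psi a h l φ x (yInf a)) = fun _ => (0 : ℝ) := by
      funext x
      rw [psi, dif_neg hnone]
    have hp1 : ∀ t : ℝ, psi₁ a h l φ t (yInf a) = 0 := by
      intro t
      rw [psi₁, hzero, deriv_const]
    rw [len, arc,
      intervalIntegral.integral_congr (g := fun _ => (1 : ℝ)) fun t _ => by rw [hp1 t]; norm_num]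
    simp


end StokesCounterexample
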